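/- arXiv:2005.10609 — 2 statements merged into one kernel-verified Lean document; each statement's English description precedes it below -/
import Mathlib

section
/- Let F and K be number fields that are linearly disjoint over Q with coprime discriminants. Then the discriminant of the compositum KF satisfies Δ_{KF} = Δ_K^{[F:Q]} · Δ_F^{[K:Q]}. -/
open NumberField Module

variable {K F L : IntermediateField ℚ ℂ}

/-- Restriction of an embedding of `L` to the pair of its restrictions to `K` and `F`. -/
noncomputable def restrictPair (hK : K ≤ L) (hF : F ≤ L) (σ : ↥L →ₐ[ℚ] ℂ) :
    ((↥K →ₐ[ℚ] ℂ) × (↥F →ₐ[ℚ] ℂ)) :=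
  (σ.comp (IntermediateField.inclusion hK), σ.comp (IntermediateField.inclusion hF))

lemma restrictPair_injective [FiniteDimensional ℚ ↥K] (hK : K ≤ L) (hF : F ≤ L)
    (hgen : K ⊔ F = L) : Function.Injective (restrictPair hK hF) := by
  intro σ τ h
  obtain ⟨h1, h2⟩ := Prod.mk.injEq .. ▸ h
  ext x
  -- the image of the equalizer in ℂ
  set A : Subalgebra ℚ ℂ := (AlgHom.equalizer σ τ).map L.val with hA
  have hKA : K.toSubalgebra ≤ A := by
    intro a ha
    exact ⟨IntermediateField.inclusion hK ⟨a, ha⟩,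
      show σ _ = τ _ from DFunLike.congr_fun h1 ⟨a, ha⟩, rfl⟩
  have hFA : F.toSubalgebra ≤ A := by
    intro a ha
    exact ⟨IntermediateField.inclusion hF ⟨a, ha⟩,
      show σ _ = τ _ from DFunLike.congr_fun h2 ⟨a, ha⟩, rfl⟩
  have hsup : (K ⊔ F).toSubalgebra ≤ A := by
    rw [IntermediateField.sup_toSubalgebra_of_left]
    exact sup_le hKA hFA
  have hx : (x : ℂ) ∈ A := hsup (by rw [hgen]; exact x.2)
  obtain ⟨y, hy, hyx⟩ := hx
  have : y = x := Subtype.ext hyx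
  rwa [this] at hy

lemma restrictPair_bijective [NumberField ↥K] [NumberField ↥F] [NumberField ↥L]
    (hK : K ≤ L) (hF : F ≤ L) (hgen : K ⊔ F = L)
    (hdim : finrank ℚ ↥L = finrank ℚ ↥K * finrank ℚ ↥F) :
    Function.Bijective (restrictPair hK hF) := by
  have : Fintype.card (↥L →ₐ[ℚ] ℂ) = Fintype.card ((↥K →ₐ[ℚ] ℂ) × (↥F →ₐ[ℚ] ℂ)) := by
    rw [Fintype.card_prod, AlgHom.card, AlgHom.card, AlgHom.card, hdim]
  exact (Fintype.bijective_iff_injective_and_card _).mpr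
    ⟨restrictPair_injective hK hF hgen, this⟩

set_option maxHeartbeats 1000000 in
open Module Matrix in
lemma trace_inclusion_mul [NumberField ↥K] [NumberField ↥F] [NumberField ↥L]
    (hK : K ≤ L) (hF : F ≤ L) (hgen : K ⊔ F = L)
    (hdim : finrank ℚ ↥L = finrank ℚ ↥K * finrank ℚ ↥F) (x : ↥K) (y : ↥F) :
    Algebra.trace ℚ ↥L (IntermediateField.inclusion hK x * IntermediateField.inclusion hF y) =
      Algebra.trace ℚ ↥K x * Algebra.trace ℚ ↥F y := by
  have hinj : Function.Injective (algebraMap ℚ ℂ) := (algebraMap ℚ ℂ).injective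
  apply hinj
  rw [trace_eq_sum_embeddings (E := ℂ), _root_.map_mul (algebraMap ℚ ℂ),
    trace_eq_sum_embeddings (E := ℂ), trace_eq_sum_embeddings (E := ℂ)]
  have hb := restrictPair_bijective hK hF hgen hdim
  let e := Equiv.ofBijective _ hb
  calc ∑ σ : ↥L →ₐ[ℚ] ℂ, σ (IntermediateField.inclusion hK x * IntermediateField.inclusion hF y)
      = ∑ σ : ↥L →ₐ[ℚ] ℂ, (e σ).1 x * (e σ).2 y := by
        refine Finset.sum_congr rfl fun σ _ => ?_
        simp [e, Equiv.ofBijective_apply, restrictPair]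
        rfl
    _ = ∑ p : (↥K →ₐ[ℚ] ℂ) × (↥F →ₐ[ℚ] ℂ), p.1 x * p.2 y := Equiv.sum_comp e (fun p => p.1 x * p.2 y)
    _ = (∑ σ : ↥K →ₐ[ℚ] ℂ, σ x) * ∑ σ : ↥F →ₐ[ℚ] ℂ, σ y := by
        rw [Fintype.sum_prod_type]
        simp [Finset.sum_mul, Finset.mul_sum]
        rw [Finset.sum_comm]

open Module Module.Free in
/-- The products of the integral bases of `K` and `F`, viewed inside `L`. -/
noncomputable def prodFam [NumberField ↥K] [NumberField ↥F] (hK : K ≤ L) (hF : F ≤ L) :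
    (ChooseBasisIndex ℤ (𝓞 ↥K)) × (ChooseBasisIndex ℤ (𝓞 ↥F)) → ↥L :=
  fun p => IntermediateField.inclusion hK (integralBasis ↥K p.1) *
    IntermediateField.inclusion hF (integralBasis ↥F p.2)

open Module Module.Free Matrix Kronecker in
set_option maxHeartbeats 1000000 in
lemma discr_prodFam [NumberField ↥K] [NumberField ↥F] [NumberField ↥L]
    (hK : K ≤ L) (hF : F ≤ L) (hgen : K ⊔ F = L)
    (hdim : finrank ℚ ↥L = finrank ℚ ↥K * finrank ℚ ↥F) :
    Algebra.discr ℚ (prodFam hK hF) =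
      (discr ↥K : ℚ) ^ finrank ℚ ↥F * (discr ↥F : ℚ) ^ finrank ℚ ↥K := by
  classical
  have hmat : Algebra.traceMatrix ℚ (prodFam hK hF) =
      (Algebra.traceMatrix ℚ (integralBasis ↥K)) ⊗ₖ (Algebra.traceMatrix ℚ (integralBasis ↥F)) := by
    ext ⟨i, j⟩ ⟨k, l⟩
    have : prodFam hK hF (i, j) * prodFam hK hF (k, l) =
        IntermediateField.inclusion hK (integralBasis ↥K i * integralBasis ↥K k) *
          IntermediateField.inclusion hF (integralBasis ↥F j * integralBasis ↥F l) := by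
      simp only [prodFam, _root_.map_mul]
      ring
    simp only [Algebra.traceMatrix_apply, Algebra.traceForm_apply, Matrix.kroneckerMap_apply, this,
      trace_inclusion_mul hK hF hgen hdim]
  have hcK : Fintype.card (ChooseBasisIndex ℤ (𝓞 ↥K)) = finrank ℚ ↥K := by
    rw [← finrank_eq_card_chooseBasisIndex, RingOfIntegers.rank]
  have hcF : Fintype.card (ChooseBasisIndex ℤ (𝓞 ↥F)) = finrank ℚ ↥F := by
    rw [← finrank_eq_card_chooseBasisIndex, RingOfIntegers.rank]
  rw [Algebra.discr_def, hmat, det_kronecker, ← Algebra.discr_def, ← Algebra.discr_def,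
    ← coe_discr, ← coe_discr, hcK, hcF]

set_option synthInstance.maxHeartbeats 400000 in
set_option maxHeartbeats 1000000 in
open Module Module.Free in
lemma prodFam_isIntegral [NumberField ↥K] [NumberField ↥F] (hK : K ≤ L) (hF : F ≤ L)
    (p : (ChooseBasisIndex ℤ (𝓞 ↥K)) × (ChooseBasisIndex ℤ (𝓞 ↥F))) :
    IsIntegral ℤ (prodFam hK hF p) := by
  have h1 : IsIntegral ℤ (integralBasis ↥K p.1) := by
    rw [integralBasis_apply]
    exact IsIntegral.algebraMap (RingOfIntegers.isIntegral _)
  have h2 : IsIntegral ℤ (integralBasis ↥F p.2) := by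
    rw [integralBasis_apply]
    exact IsIntegral.algebraMap (RingOfIntegers.isIntegral _)
  exact ((h1.map (IntermediateField.inclusion hK).toRingHom.toIntAlgHom).mul
    (h2.map (IntermediateField.inclusion hF).toRingHom.toIntAlgHom))

open Module Module.Free in
lemma prodFam_linearIndependent [NumberField ↥K] [NumberField ↥F] [NumberField ↥L]
    (hK : K ≤ L) (hF : F ≤ L) (hgen : K ⊔ F = L)
    (hdim : finrank ℚ ↥L = finrank ℚ ↥K * finrank ℚ ↥F) :
    LinearIndependent ℚ (prodFam hK hF) := by
  by_contra h
  have := Algebra.discr_zero_of_not_linearIndependent ℚ h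
  rw [discr_prodFam hK hF hgen hdim] at this
  have h1 : (discr ↥K : ℚ) ≠ 0 := Int.cast_ne_zero.mpr (discr_ne_zero ↥K)
  have h2 : (discr ↥F : ℚ) ≠ 0 := Int.cast_ne_zero.mpr (discr_ne_zero ↥F)
  exact (mul_ne_zero (pow_ne_zero _ h1) (pow_ne_zero _ h2)) this

open Module Module.Free in
/-- The product family as a `ℚ`-basis of `L`. -/
noncomputable def prodBasis [NumberField ↥K] [NumberField ↥F] [NumberField ↥L]
    (hK : K ≤ L) (hF : F ≤ L) (hgen : K ⊔ F = L)
    (hdim : finrank ℚ ↥L = finrank ℚ ↥K * finrank ℚ ↥F) :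
    Basis ((ChooseBasisIndex ℤ (𝓞 ↥K)) × (ChooseBasisIndex ℤ (𝓞 ↥F))) ℚ ↥L :=
  basisOfLinearIndependentOfCardEqFinrank (prodFam_linearIndependent hK hF hgen hdim)
    (by rw [Fintype.card_prod, ← finrank_eq_card_chooseBasisIndex,
      ← finrank_eq_card_chooseBasisIndex, RingOfIntegers.rank, RingOfIntegers.rank, hdim])

open Module Module.Free in
lemma coe_prodBasis [NumberField ↥K] [NumberField ↥F] [NumberField ↥L]
    (hK : K ≤ L) (hF : F ≤ L) (hgen : K ⊔ F = L)
    (hdim : finrank ℚ ↥L = finrank ℚ ↥K * finrank ℚ ↥F) :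
    ⇑(prodBasis hK hF hgen hdim) = prodFam hK hF :=
  coe_basisOfLinearIndependentOfCardEqFinrank _ _

open Module Module.Free Matrix in
set_option maxHeartbeats 1000000 in
set_option synthInstance.maxHeartbeats 400000 in
/-- Cramer's rule argument: if all "conjugate sums" `∑ j, y j * ρ (bF j)` are algebraic
integers, then `discr F * y j` is an algebraic integer for each `j`. -/
lemma core_cramer (F : IntermediateField ℚ ℂ) [NumberField ↥F]
    (y : ChooseBasisIndex ℤ (𝓞 ↥F) → ℂ)
    (hy : ∀ ρ : ↥F →ₐ[ℚ] ℂ, IsIntegral ℤ (∑ j, y j * ρ (integralBasis ↥F j))) :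
    ∀ j, IsIntegral ℤ ((discr ↥F : ℂ) * y j) := by
  classical
  have hcard : Fintype.card (ChooseBasisIndex ℤ (𝓞 ↥F)) = Fintype.card (↥F →ₐ[ℚ] ℂ) := by
    rw [AlgHom.card, ← finrank_eq_card_chooseBasisIndex, RingOfIntegers.rank]
  let eq : ChooseBasisIndex ℤ (𝓞 ↥F) ≃ (↥F →ₐ[ℚ] ℂ) := Fintype.equivOfCardEq hcard
  set M : Matrix _ _ ℂ := Algebra.embeddingsMatrixReindex ℚ ℂ (integralBasis ↥F) eq with hM
  have hMint : ∀ i j, IsIntegral ℤ (M i j) := by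
    intro i j
    have : IsIntegral ℤ (integralBasis ↥F i) := by
      rw [integralBasis_apply]
      exact IsIntegral.algebraMap (RingOfIntegers.isIntegral _)
    exact this.map (eq j).toRingHom.toIntAlgHom
  have hv : ∀ j, IsIntegral ℤ (Mᵀ.mulVec y j) := by
    intro j
    have : Mᵀ.mulVec y j = ∑ i, y i * (eq j) (integralBasis ↥F i) := by
      simp only [Matrix.mulVec, dotProduct, transpose_apply, hM,
        Algebra.embeddingsMatrixReindex, Algebra.embeddingsMatrix, Matrix.reindex_apply,
        Matrix.submatrix_apply, Equiv.refl_symm, Equiv.coe_refl, id_eq, Equiv.apply_symm_apply]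
      exact Finset.sum_congr rfl fun i _ => mul_comm _ _
    rw [this]
    exact hy (eq j)
  intro j
  have hadj : ∀ i k, IsIntegral ℤ ((Mᵀ.adjugate) i k) := by
    intro i k
    rw [Matrix.adjugate_apply]
    refine IsIntegral.det fun a b => ?_
    by_cases hak : a = k
    · subst hak
      simp only [Matrix.updateRow_self]
      by_cases hbi : b = i <;> simp [hbi, Pi.single_apply] <;> [exact isIntegral_one;
        exact isIntegral_zero]
    · rw [Matrix.updateRow_ne hak]
      exact hMint b a
  have key : (Mᵀ.adjugate).mulVec (Mᵀ.mulVec y) = Mᵀ.det • y := by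
    rw [Matrix.mulVec_mulVec, Matrix.adjugate_mul, Matrix.smul_mulVec, Matrix.one_mulVec]
  have h1 : IsIntegral ℤ (Mᵀ.det * y j) := by
    have : Mᵀ.det * y j = (Mᵀ.adjugate).mulVec (Mᵀ.mulVec y) j := by
      rw [key]; rfl
    rw [this]
    simp only [Matrix.mulVec, dotProduct]
    exact IsIntegral.sum _ fun k _ => (hadj j k).mul (hv k)
  have h2 : IsIntegral ℤ (Mᵀ.det * (Mᵀ.det * y j)) :=
    (IsIntegral.det fun i k => hMint k i).mul h1
  have hdet : Mᵀ.det * (Mᵀ.det * y j) = (discr ↥F : ℂ) * y j := by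
    rw [← mul_assoc, Matrix.det_transpose, ← pow_two,
      ← Algebra.discr_eq_det_embeddingsMatrixReindex_pow_two ℚ ℂ (integralBasis ↥F) eq,
      ← coe_discr]
    norm_num
  rwa [hdet] at h2

open Module Module.Free in
set_option synthInstance.maxHeartbeats 400000 in
lemma coords_int (K : IntermediateField ℚ ℂ) [NumberField ↥K] (w : ↥K) (hw : IsIntegral ℤ w)
    (i : ChooseBasisIndex ℤ (𝓞 ↥K)) : ∃ z : ℤ, (integralBasis ↥K).repr w i = z := by
  have : w = algebraMap (𝓞 ↥K) ↥K ⟨w, (mem_integralClosure_iff ℤ ↥K).mpr hw⟩ := rfl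
  rw [this]
  exact ⟨_, integralBasis_repr_apply (K := ↥K) _ i⟩

open Module Module.Free in
set_option maxHeartbeats 2000000 in
set_option synthInstance.maxHeartbeats 400000 in
lemma repr_int [NumberField ↥K] [NumberField ↥F] [NumberField ↥L]
    (hK : K ≤ L) (hF : F ≤ L) (hgen : K ⊔ F = L)
    (hdim : finrank ℚ ↥L = finrank ℚ ↥K * finrank ℚ ↥F)
    (hco : IsCoprime (discr ↥K) (discr ↥F)) (x : ↥L) (hx : IsIntegral ℤ x)
    (p : (ChooseBasisIndex ℤ (𝓞 ↥K)) × (ChooseBasisIndex ℤ (𝓞 ↥F))) :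
    ∃ z : ℤ, (prodBasis hK hF hgen hdim).repr x p = z := by
  classical
  set B := prodBasis hK hF hgen hdim with hB
  set a : _ → ℚ := fun q => B.repr x q with ha
  have hBq : ∀ q, B q = prodFam hK hF q :=
    fun q => congrFun (coe_prodBasis hK hF hgen hdim) q
  have hb := restrictPair_bijective hK hF hgen hdim
  let e := Equiv.ofBijective _ hb
  have hx_expand : ∀ σ : ↥L →ₐ[ℚ] ℂ, σ x =
      ∑ q : (ChooseBasisIndex ℤ (𝓞 ↥K)) × (ChooseBasisIndex ℤ (𝓞 ↥F)),
        algebraMap ℚ ℂ (a q) * ((σ.comp (IntermediateField.inclusion hK)) (integralBasis ↥K q.1) *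
          (σ.comp (IntermediateField.inclusion hF)) (integralBasis ↥F q.2)) := by
    intro σ
    conv_lhs => rw [← B.sum_repr x]
    rw [map_sum]
    refine Finset.sum_congr rfl fun q _ => ?_
    rw [hBq, Algebra.smul_def, _root_.map_mul, AlgHom.commutes]
    simp only [prodFam, _root_.map_mul, AlgHom.comp_apply]
    rfl
  -- F-side claim
  have claimF : ∀ q, ∃ z : ℤ, (discr ↥F : ℚ) * a q = z := by
    rintro ⟨i, j⟩
    set y : ChooseBasisIndex ℤ (𝓞 ↥F) → ℂ :=
      fun j' => ∑ i', algebraMap ℚ ℂ (a (i', j')) * K.val (integralBasis ↥K i') with hy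
    have hcore : ∀ j', IsIntegral ℤ ((discr ↥F : ℂ) * y j') := by
      apply core_cramer
      intro ρ
      set σ := e.symm (K.val, ρ) with hσ
      have hres : restrictPair hK hF σ = (K.val, ρ) := e.apply_symm_apply (K.val, ρ)
      have hres1 : σ.comp (IntermediateField.inclusion hK) = K.val := congrArg Prod.fst hres
      have hres2 : σ.comp (IntermediateField.inclusion hF) = ρ := congrArg Prod.snd hres
      have hint : IsIntegral ℤ (σ x) := hx.map σ.toRingHom.toIntAlgHom
      have heq : σ x = ∑ j', y j' * ρ (integralBasis ↥F j') := by
        rw [hx_expand σ, hres1, hres2, Fintype.sum_prod_type, Finset.sum_comm]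
        refine Finset.sum_congr rfl fun j' _ => ?_
        rw [hy, Finset.sum_mul]
        refine Finset.sum_congr rfl fun i' _ => ?_
        rw [mul_assoc]
        rfl
      rwa [heq] at hint
    set w : ↥K := ∑ i', a (i', j) • integralBasis ↥K i' with hw
    have himg : K.val ((discr ↥F : ℚ) • w) = (discr ↥F : ℂ) * y j := by
      rw [Algebra.smul_def, _root_.map_mul, (show ∀ r : ℚ, K.val (algebraMap ℚ ↥K r) = algebraMap ℚ ℂ r from fun r => K.val.commutes r)]
      congr 1
      rw [hw, map_sum, hy]
      refine Finset.sum_congr rfl fun i' _ => ?_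
      rw [Algebra.smul_def, _root_.map_mul, (show ∀ r : ℚ, K.val (algebraMap ℚ ↥K r) = algebraMap ℚ ℂ r from fun r => K.val.commutes r)]
    have hwj : IsIntegral ℤ ((discr ↥F : ℚ) • w) := by
      have hval : IsIntegral ℤ (K.val ((discr ↥F : ℚ) • w)) := himg ▸ hcore j
      exact (isIntegral_algHom_iff K.val.toRingHom.toIntAlgHom
        Subtype.val_injective).mp hval
    have hrep : (integralBasis ↥K).repr ((discr ↥F : ℚ) • w) i = (discr ↥F : ℚ) * a (i, j) := by
      rw [map_smul, Finsupp.smul_apply, smul_eq_mul, hw]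
      congr 1
      exact congrFun ((integralBasis ↥K).repr_sum_self fun i' => a (i', j)) i
    obtain ⟨z, hz⟩ := coords_int K _ hwj i
    exact ⟨z, by rw [← hrep, hz]⟩
  -- K-side claim
  have claimK : ∀ q, ∃ z : ℤ, (discr ↥K : ℚ) * a q = z := by
    rintro ⟨i, j⟩
    set y : ChooseBasisIndex ℤ (𝓞 ↥K) → ℂ :=
      fun i' => ∑ j', algebraMap ℚ ℂ (a (i', j')) * F.val (integralBasis ↥F j') with hy
    have hcore : ∀ i', IsIntegral ℤ ((discr ↥K : ℂ) * y i') := by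
      apply core_cramer
      intro τ
      set σ := e.symm (τ, F.val) with hσ
      have hres : restrictPair hK hF σ = (τ, F.val) := e.apply_symm_apply (τ, F.val)
      have hres1 : σ.comp (IntermediateField.inclusion hK) = τ := congrArg Prod.fst hres
      have hres2 : σ.comp (IntermediateField.inclusion hF) = F.val := congrArg Prod.snd hres
      have hint : IsIntegral ℤ (σ x) := hx.map σ.toRingHom.toIntAlgHom
      have heq : σ x = ∑ i', y i' * τ (integralBasis ↥K i') := by
        rw [hx_expand σ, hres1, hres2, Fintype.sum_prod_type]
        refine Finset.sum_congr rfl fun i' _ => ?_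
        rw [hy, Finset.sum_mul]
        refine Finset.sum_congr rfl fun j' _ => ?_
        exact (mul_assoc _ _ _).symm.trans (mul_right_comm _ _ _)
      rwa [heq] at hint
    set w : ↥F := ∑ j', a (i, j') • integralBasis ↥F j' with hw
    have himg : F.val ((discr ↥K : ℚ) • w) = (discr ↥K : ℂ) * y i := by
      rw [Algebra.smul_def, _root_.map_mul, (show ∀ r : ℚ, F.val (algebraMap ℚ ↥F r) = algebraMap ℚ ℂ r from fun r => F.val.commutes r)]
      congr 1
      rw [hw, map_sum, hy]
      refine Finset.sum_congr rfl fun j' _ => ?_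
      rw [Algebra.smul_def, _root_.map_mul, (show ∀ r : ℚ, F.val (algebraMap ℚ ↥F r) = algebraMap ℚ ℂ r from fun r => F.val.commutes r)]
    have hwj : IsIntegral ℤ ((discr ↥K : ℚ) • w) := by
      have hval : IsIntegral ℤ (F.val ((discr ↥K : ℚ) • w)) := himg ▸ hcore i
      exact (isIntegral_algHom_iff F.val.toRingHom.toIntAlgHom
        Subtype.val_injective).mp hval
    have hrep : (integralBasis ↥F).repr ((discr ↥K : ℚ) • w) j = (discr ↥K : ℚ) * a (i, j) := by
      rw [map_smul, Finsupp.smul_apply, smul_eq_mul, hw]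
      congr 1
      exact congrFun ((integralBasis ↥F).repr_sum_self fun j' => a (i, j')) j
    obtain ⟨z, hz⟩ := coords_int F _ hwj j
    exact ⟨z, by rw [← hrep, hz]⟩
  obtain ⟨u, v, huv⟩ := hco
  obtain ⟨z1, hz1⟩ := claimK p
  obtain ⟨z2, hz2⟩ := claimF p
  refine ⟨u * z1 + v * z2, ?_⟩
  have h1 : ((u * discr ↥K + v * discr ↥F : ℤ) : ℚ) = 1 := by exact_mod_cast huv
  calc a p = ((u * discr ↥K + v * discr ↥F : ℤ) : ℚ) * a p := by rw [h1, one_mul]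
    _ = (u : ℚ) * ((discr ↥K : ℚ) * a p) + (v : ℚ) * ((discr ↥F : ℚ) * a p) := by
        push_cast; ring
    _ = (u : ℚ) * z1 + (v : ℚ) * z2 := by rw [hz1, hz2]
    _ = ((u * z1 + v * z2 : ℤ) : ℚ) := by push_cast; ring

open Module Module.Free in
set_option maxHeartbeats 2000000 in
set_option synthInstance.maxHeartbeats 400000 in
/-- Let `F` and `K` be number fields (realized inside `ℂ`) that are linearly disjoint over
`ℚ` and have coprime discriminants. Then the discriminant of the compositum `KF` satisfies
`Δ_{KF} = Δ_K^{[F:ℚ]} · Δ_F^{[K:ℚ]}`. -/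
theorem discr_compositum_of_coprime (K F : IntermediateField ℚ ℂ)
    [NumberField ↥K] [NumberField ↥F] [NumberField ↥(K ⊔ F)]
    (hdisj : Module.finrank ℚ ↥(K ⊔ F) = Module.finrank ℚ K * Module.finrank ℚ F)
    (hco : IsCoprime (NumberField.discr K) (NumberField.discr F)) :
    NumberField.discr ↥(K ⊔ F) =
      NumberField.discr K ^ (Module.finrank ℚ F) *
        NumberField.discr F ^ (Module.finrank ℚ K) := by
  classical
  have hK : K ≤ K ⊔ F := le_sup_left
  have hF : F ≤ K ⊔ F := le_sup_right
  set B := prodBasis hK hF rfl hdisj with hBdef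
  have hBq : ∀ q, B q = prodFam hK hF q := fun q => congrFun (coe_prodBasis hK hF rfl hdisj) q
  have h1 : Algebra.discr ℚ ⇑B = Algebra.discr ℚ ⇑(integralBasis ↥(K ⊔ F)) := by
    apply Algebra.discr_eq_discr_of_toMatrix_coeff_isIntegral
    · intro i j
      rw [Basis.toMatrix_apply]
      have hint : IsIntegral ℤ (integralBasis ↥(K ⊔ F) j) := by
        rw [integralBasis_apply]
        exact IsIntegral.algebraMap (RingOfIntegers.isIntegral _)
      obtain ⟨z, hz⟩ := repr_int hK hF rfl hdisj hco _ hint i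
      rw [hz, ← eq_intCast (algebraMap ℤ ℚ) z]
      exact isIntegral_algebraMap
    · intro i j
      rw [Basis.toMatrix_apply]
      have hint : IsIntegral ℤ (B j) := by
        rw [hBq]
        exact prodFam_isIntegral hK hF j
      obtain ⟨z, hz⟩ := coords_int (K ⊔ F) _ hint i
      rw [hz, ← eq_intCast (algebraMap ℤ ℚ) z]
      exact isIntegral_algebraMap
  have h2 : Algebra.discr ℚ ⇑B = (discr ↥K : ℚ) ^ finrank ℚ ↥F * (discr ↥F : ℚ) ^ finrank ℚ ↥K := by
    rw [show ⇑B = prodFam hK hF from coe_prodBasis hK hF rfl hdisj]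
    exact discr_prodFam hK hF rfl hdisj
  have h3 : (discr ↥(K ⊔ F) : ℚ) =
      (discr ↥K : ℚ) ^ finrank ℚ ↥F * (discr ↥F : ℚ) ^ finrank ℚ ↥K := by
    rw [coe_discr, ← h1, h2]
  exact_mod_cast h3
end

section
/- For all real x ≥ 7, the logarithmic integral Li(x) = ∫_2^x dt/log t satisfies Li(x) ≥ x/log x. -/
open Real intervalIntegral MeasureTheory

lemma li_intg (a b : ℝ) (h2a : 2 ≤ a) (hab : a ≤ b) :
    IntervalIntegrable (fun t => 1 / Real.log t) volume a b := by
  apply ContinuousOn.intervalIntegrable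
  rw [Set.uIcc_of_le hab]
  apply ContinuousOn.div continuousOn_const
  · exact fun t ht => (Real.continuousAt_log (by
      have := ht.1; intro h; rw [h] at this; linarith)).continuousWithinAt
  · intro t ht
    have h2t : 2 ≤ t := le_trans h2a ht.1
    have : 0 < Real.log t := Real.log_pos (by linarith)
    linarith

lemma li_piece (a b : ℝ) (h2a : 2 ≤ a) (hab : a ≤ b) :
    (b - a) / Real.log b ≤ ∫ t in a..b, 1 / Real.log t := by
  have h2b : 2 ≤ b := le_trans h2a hab
  have hlb : 0 < Real.log b := Real.log_pos (by linarith)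
  have h := intervalIntegral.integral_mono_on (μ := volume)
      (f := fun _ => 1 / Real.log b) (g := fun t => 1 / Real.log t) hab
      intervalIntegrable_const (li_intg a b h2a hab) ?_
  · rw [intervalIntegral.integral_const, smul_eq_mul, mul_one_div] at h
    exact h
  · intro t ht
    have hlt : 0 < Real.log t := Real.log_pos (by linarith [ht.1])
    apply div_le_div_of_nonneg_left one_pos.le hlt
    exact Real.log_le_log (by linarith [ht.1]) ht.2

lemma li_step (a b A : ℝ) (m : ℕ) (h2a : 2 ≤ a) (hab : a ≤ b)
    (hm : b ^ 16 ≤ 2 ^ m)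
    (hA : A ≤ ∫ t in (2:ℝ)..a, 1 / Real.log t) :
    A + (b - a) * 16 / (m * 0.6931471808) ≤ ∫ t in (2:ℝ)..b, 1 / Real.log t := by
  have h2b : 2 ≤ b := le_trans h2a hab
  have hm16 : (16:ℕ) ≤ m := by
    by_contra h
    push_neg at h
    have : (2:ℝ)^m < 2^16 := by
      apply pow_lt_pow_right₀ one_lt_two h
    have h216 : (2:ℝ)^16 ≤ b^16 := by
      apply pow_le_pow_left₀ (by norm_num) h2b
    linarith
  have hmpos : (0:ℝ) < m := by
    have : (16:ℝ) ≤ m := by exact_mod_cast hm16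
    linarith
  have hlogb : Real.log b ≤ m * 0.6931471808 / 16 := by
    have h1 : Real.log (b ^ 16) ≤ Real.log (2 ^ m) :=
      Real.log_le_log (by positivity) hm
    rw [Real.log_pow, Real.log_pow] at h1
    have h2 : Real.log 2 < 0.6931471808 := Real.log_two_lt_d9
    push_cast at h1
    nlinarith [Real.log_two_gt_d9]
  have hlbpos : 0 < Real.log b := Real.log_pos (by linarith)
  have hsplit : (∫ t in (2:ℝ)..a, 1 / Real.log t) + ∫ t in a..b, 1 / Real.log t
      = ∫ t in (2:ℝ)..b, 1 / Real.log t :=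
    intervalIntegral.integral_add_adjacent_intervals (li_intg 2 a le_rfl h2a)
      (li_intg a b h2a hab)
  have hpiece := li_piece a b h2a hab
  have hq : (b - a) * 16 / (m * 0.6931471808) ≤ (b - a) / Real.log b := by
    rw [div_le_div_iff₀ (by positivity) hlbpos]
    have hba : 0 ≤ b - a := by linarith
    nlinarith
  linarith

lemma li_last (a A : ℝ) (h2a : 2 ≤ a) (ha7 : a ≤ 7)
    (hA : A ≤ ∫ t in (2:ℝ)..a, 1 / Real.log t) :
    A + (7 - a) / 2 ≤ ∫ t in (2:ℝ)..7, 1 / Real.log t := by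
  have hlog7 : Real.log 7 ≤ 2 := by
    rw [Real.log_le_iff_le_exp (by norm_num)]
    have h := Real.exp_one_gt_d9
    have h2 : Real.exp 2 = Real.exp 1 ^ 2 := by
      rw [← Real.exp_nat_mul]; norm_num
    rw [h2]; nlinarith
  have hl7pos : 0 < Real.log 7 := Real.log_pos (by norm_num)
  have hsplit : (∫ t in (2:ℝ)..a, 1 / Real.log t) + ∫ t in a..7, 1 / Real.log t
      = ∫ t in (2:ℝ)..7, 1 / Real.log t :=
    intervalIntegral.integral_add_adjacent_intervals (li_intg 2 a le_rfl h2a)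
      (li_intg a 7 h2a ha7)
  have hpiece := li_piece a 7 h2a ha7
  have hq : (7 - a) / 2 ≤ (7 - a) / Real.log 7 := by
    apply div_le_div_of_nonneg_left (by linarith) hl7pos hlog7
  linarith

lemma li7_lb : (7:ℝ) / 1.94 ≤ ∫ t in (2:ℝ)..7, 1 / Real.log t := by
  have h0 : (0:ℝ) ≤ ∫ t in (2:ℝ)..2, 1 / Real.log t := by simp
  have h1 := li_step 2 2.088547 _ 17 (by norm_num) (by norm_num) (by norm_num) h0
  have h2 := li_step 2.088547 2.181015 _ 18 (by norm_num) (by norm_num) (by norm_num) h1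
  have h3 := li_step 2.181015 2.277577 _ 19 (by norm_num) (by norm_num) (by norm_num) h2
  have h4 := li_step 2.277577 2.378414 _ 20 (by norm_num) (by norm_num) (by norm_num) h3
  have h5 := li_step 2.378414 2.483715 _ 21 (by norm_num) (by norm_num) (by norm_num) h4
  have h6 := li_step 2.483715 2.593679 _ 22 (by norm_num) (by norm_num) (by norm_num) h5
  have h7 := li_step 2.593679 2.708511 _ 23 (by norm_num) (by norm_num) (by norm_num) h6
  have h8 := li_step 2.708511 2.828427 _ 24 (by norm_num) (by norm_num) (by norm_num) h7
  have h9 := li_step 2.828427 2.953652 _ 25 (by norm_num) (by norm_num) (by norm_num) h8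
  have h10 := li_step 2.953652 3.084421 _ 26 (by norm_num) (by norm_num) (by norm_num) h9
  have h11 := li_step 3.084421 3.22098 _ 27 (by norm_num) (by norm_num) (by norm_num) h10
  have h12 := li_step 3.22098 3.363585 _ 28 (by norm_num) (by norm_num) (by norm_num) h11
  have h13 := li_step 3.363585 3.512504 _ 29 (by norm_num) (by norm_num) (by norm_num) h12
  have h14 := li_step 3.512504 3.668016 _ 30 (by norm_num) (by norm_num) (by norm_num) h13
  have h15 := li_step 3.668016 3.830413 _ 31 (by norm_num) (by norm_num) (by norm_num) h14
  have h16 := li_step 3.830413 4 _ 32 (by norm_num) (by norm_num) (by norm_num) h15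
  have h17 := li_step 4 4.177095 _ 33 (by norm_num) (by norm_num) (by norm_num) h16
  have h18 := li_step 4.177095 4.36203 _ 34 (by norm_num) (by norm_num) (by norm_num) h17
  have h19 := li_step 4.36203 4.555154 _ 35 (by norm_num) (by norm_num) (by norm_num) h18
  have h20 := li_step 4.555154 4.756828 _ 36 (by norm_num) (by norm_num) (by norm_num) h19
  have h21 := li_step 4.756828 4.967431 _ 37 (by norm_num) (by norm_num) (by norm_num) h20
  have h22 := li_step 4.967431 5.187358 _ 38 (by norm_num) (by norm_num) (by norm_num) h21
  have h23 := li_step 5.187358 5.417022 _ 39 (by norm_num) (by norm_num) (by norm_num) h22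
  have h24 := li_step 5.417022 5.656854 _ 40 (by norm_num) (by norm_num) (by norm_num) h23
  have h25 := li_step 5.656854 5.907304 _ 41 (by norm_num) (by norm_num) (by norm_num) h24
  have h26 := li_step 5.907304 6.168843 _ 42 (by norm_num) (by norm_num) (by norm_num) h25
  have h27 := li_step 6.168843 6.441961 _ 43 (by norm_num) (by norm_num) (by norm_num) h26
  have h28 := li_step 6.441961 6.727171 _ 44 (by norm_num) (by norm_num) (by norm_num) h27
  have hfin := li_last 6.727171 _ (by norm_num) (by norm_num) h28
  refine le_trans ?_ hfin
  push_cast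
  norm_num

lemma log7_ge : (1.94:ℝ) ≤ Real.log 7 := by
  rw [Real.le_log_iff_exp_le (by norm_num)]
  have h1 : Real.exp 1.94 ^ 50 = Real.exp 1 ^ 97 := by
    rw [← Real.exp_nat_mul, ← Real.exp_nat_mul]
    norm_num
  have h2 : Real.exp 1 ^ 97 ≤ (2.7182818286:ℝ) ^ 97 :=
    pow_le_pow_left₀ (Real.exp_pos 1).le Real.exp_one_lt_d9.le 97
  have h3 : (2.7182818286:ℝ) ^ 97 ≤ 7 ^ 50 := by norm_num
  have h4 : Real.exp 1.94 ^ 50 ≤ (7:ℝ) ^ 50 := by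
    rw [h1]; exact le_trans h2 h3
  exact le_of_pow_le_pow_left₀ (by norm_num) (by norm_num) h4

lemma li7 : (7:ℝ) / Real.log 7 ≤ ∫ t in (2:ℝ)..7, 1 / Real.log t := by
  refine le_trans ?_ li7_lb
  have hl7 : (0:ℝ) < 1.94 := by norm_num
  exact div_le_div_of_nonneg_left (by norm_num) hl7 log7_ge

lemma deriv_intg (x : ℝ) (hx : 7 ≤ x) :
    IntervalIntegrable (fun t => (Real.log t - 1) / (Real.log t) ^ 2) volume 7 x := by
  apply ContinuousOn.intervalIntegrable
  rw [Set.uIcc_of_le hx]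
  have hne : ∀ t ∈ Set.Icc (7:ℝ) x, t ≠ 0 := by
    intro t ht h; have := ht.1; rw [h] at this; linarith
  have hlog : ContinuousOn Real.log (Set.Icc (7:ℝ) x) :=
    fun t ht => (Real.continuousAt_log (hne t ht)).continuousWithinAt
  apply ContinuousOn.div (hlog.sub continuousOn_const) (hlog.pow 2)
  intro t ht
  have : 0 < Real.log t := Real.log_pos (by linarith [ht.1])
  exact pow_ne_zero 2 this.ne'

lemma li_mono (x : ℝ) (hx : 7 ≤ x) :
    x / Real.log x - 7 / Real.log 7 ≤ ∫ t in (7:ℝ)..x, 1 / Real.log t := by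
  have key : (∫ t in (7:ℝ)..x, (Real.log t - 1) / (Real.log t) ^ 2)
      = x / Real.log x - 7 / Real.log 7 := by
    apply intervalIntegral.integral_eq_sub_of_hasDerivAt
    · intro t ht
      rw [Set.uIcc_of_le hx] at ht
      have h7t : (7:ℝ) ≤ t := ht.1
      have htpos : (0:ℝ) < t := by linarith
      have hlt : 0 < Real.log t := Real.log_pos (by linarith)
      have hd : HasDerivAt (fun y => y / Real.log y)
          ((1 * Real.log t - t * t⁻¹) / (Real.log t) ^ 2) t :=
        (hasDerivAt_id t).div (Real.hasDerivAt_log (ne_of_gt htpos)) (ne_of_gt hlt)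
      rw [mul_inv_cancel₀ (ne_of_gt htpos), one_mul] at hd
      exact hd
    · exact deriv_intg x hx
  rw [← key]
  apply intervalIntegral.integral_mono_on hx (deriv_intg x hx)
    (li_intg 7 x (by norm_num) hx)
  intro t ht
  have hlt : 0 < Real.log t := Real.log_pos (by linarith [ht.1])
  rw [div_le_div_iff₀ (by positivity) hlt]
  nlinarith

/-- For all real `x ≥ 7`, the logarithmic integral `Li(x) = ∫_2^x dt/log t` satisfies
`Li(x) ≥ x / log x`. -/
theorem li_ge_x_div_log (x : ℝ) (hx : 7 ≤ x) :
    x / Real.log x ≤ ∫ t in (2 : ℝ)..x, 1 / Real.log t := by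
  have hsplit : (∫ t in (2:ℝ)..7, 1 / Real.log t) + ∫ t in (7:ℝ)..x, 1 / Real.log t
      = ∫ t in (2:ℝ)..x, 1 / Real.log t :=
    intervalIntegral.integral_add_adjacent_intervals
      (li_intg 2 7 le_rfl (by norm_num)) (li_intg 7 x (by norm_num) hx)
  linarith [li7, li_mono x hx]
end
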